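/- Let f : I → ℝ be q,ω-differentiable on I. Then for all a,b ∈ I the function D_{q,ω}[f] is q,ω-integrable on [a,b] and ∫_a^b D_{q,ω}[f](t) d_{q,ω}t = f(b) − f(a). -/

import Mathlib

noncomputable section

namespace Hahn

/-- The fixed point `ω₀ = ω/(1-q)` of `t ↦ qt+ω`. -/
def omega0 (q ω : ℝ) : ℝ := ω / (1 - q)

/-- The Hahn difference operator of `f` (viewed as a function on the interval `I`):
for `t ≠ ω₀` it is `(f(qt+ω) - f(t))/((q-1)t+ω)`, and at `ω₀` it is the derivative of `f`
at `ω₀` (within `I`). -/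
def hahnD (q ω : ℝ) (I : Set ℝ) (f : ℝ → ℝ) (t : ℝ) : ℝ :=
  if t = omega0 q ω then derivWithin f I t
  else (f (q * t + ω) - f t) / ((q - 1) * t + ω)

/-- `f` is `q,ω`-differentiable on `I`: the only nontrivial requirement is
differentiability at `ω₀` (for `t ≠ ω₀` the Hahn quotient always exists). -/
def HahnDiffOn (q ω : ℝ) (I : Set ℝ) (f : ℝ → ℝ) : Prop :=
  DifferentiableWithinAt ℝ f I (omega0 q ω)

/-- The `q`-bracket `[k]_q = (1-q^k)/(1-q)`. -/
def qnum (q : ℝ) (k : ℕ) : ℝ := (1 - q ^ k) / (1 - q)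

/-- The `k`-th term of the Jackson–Nörlund series of `f` at `x`. -/
def jnTerm (q ω : ℝ) (f : ℝ → ℝ) (x : ℝ) (k : ℕ) : ℝ :=
  q ^ k * f (q ^ k * x + ω * qnum q k)

/-- The Jackson–Nörlund series of `f` converges at `x`. -/
def JNSummable (q ω : ℝ) (f : ℝ → ℝ) (x : ℝ) : Prop :=
  Summable (jnTerm q ω f x)

/-- The Jackson–Nörlund integral `∫_{ω₀}^x f(t) d_{q,ω}t`. -/
def jnInt0 (q ω : ℝ) (f : ℝ → ℝ) (x : ℝ) : ℝ :=
  (x * (1 - q) - ω) * ∑' k : ℕ, jnTerm q ω f x k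

/-- The Jackson–Nörlund integral `∫_a^b f(t) d_{q,ω}t`. -/
def jnInt (q ω : ℝ) (f : ℝ → ℝ) (a b : ℝ) : ℝ :=
  jnInt0 q ω f b - jnInt0 q ω f a

/-- `f` is `q,ω`-integrable on `[a,b]`. -/
def JNIntegrable (q ω : ℝ) (f : ℝ → ℝ) (a b : ℝ) : Prop :=
  JNSummable q ω f a ∧ JNSummable q ω f b

/-- The set `[s]_{q,ω} = {q^n s + ω[n]_q : n ∈ ℕ} ∪ {ω₀}`. -/
def qwOrbit (q ω s : ℝ) : Set ℝ :=
  {x | ∃ n : ℕ, x = q ^ n * s + ω * qnum q n} ∪ {omega0 q ω}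

/-- The `q,ω`-interval `[a,b]_{q,ω}`. -/
def qwInterval (q ω a b : ℝ) : Set ℝ :=
  qwOrbit q ω a ∪ qwOrbit q ω b

lemma key_lemma
    (q ω : ℝ) (hq : 0 < q) (hq1 : q < 1)
    (I : Set ℝ) (hI : I.OrdConnected) (hmem : omega0 q ω ∈ I)
    (f : ℝ → ℝ) (hf : HahnDiffOn q ω I f) (x : ℝ) (hx : x ∈ I) :
    JNSummable q ω (hahnD q ω I f) x ∧
      jnInt0 q ω (hahnD q ω I f) x = f x - f (omega0 q ω) := by
  set w := omega0 q ω with hw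
  have hq0 : (1 : ℝ) - q ≠ 0 := by linarith
  have hwq : w * (1 - q) = ω := by
    rw [hw, omega0]; field_simp
  have hxk : ∀ k : ℕ, q ^ k * x + ω * qnum q k = w + q ^ k * (x - w) := by
    intro k
    have : ω * qnum q k = w * (1 - q ^ k) := by
      rw [qnum, ← hwq]; field_simp
    rw [this]; ring
  by_cases hxw : x = w
  · -- trivial case x = ω₀
    have hterm : ∀ k : ℕ, jnTerm q ω (hahnD q ω I f) x k
        = derivWithin f I w * q ^ k := by
      intro k
      rw [jnTerm, hxk k, hxw]
      simp [hahnD, hw, mul_comm]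
    constructor
    · rw [JNSummable]
      apply Summable.congr ((summable_geometric_of_lt_one hq.le hq1).mul_left
        (derivWithin f I w))
      intro k; rw [hterm k]
    · have : x * (1 - q) - ω = 0 := by rw [hxw, hwq]; ring
      rw [jnInt0, this, hxw]; ring
  · -- main case
    set d : ℝ := (q - 1) * x + ω with hd
    have hdval : d = (q - 1) * (x - w) := by
      rw [hd]; rw [← hwq]; ring
    have hdne : d ≠ 0 := by
      rw [hdval]
      exact mul_ne_zero (by linarith) (sub_ne_zero.2 hxw)
    set b : ℕ → ℝ := fun k => f (w + q ^ k * (x - w)) - f w with hb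
    -- points of the orbit lie in I
    have hmemk : ∀ k : ℕ, w + q ^ k * (x - w) ∈ I := by
      intro k
      have h0 : (0:ℝ) ≤ q ^ k := pow_nonneg hq.le k
      have h1 : q ^ k ≤ 1 := pow_le_one₀ hq.le hq1.le
      rcases le_total w x with h | h
      · exact hI.out hmem hx ⟨by nlinarith, by nlinarith⟩
      · exact hI.out hx hmem ⟨by nlinarith, by nlinarith⟩
    -- summability of b
    have hb_sum : Summable b := by
      have hO : (fun y => f y - f w) =O[nhdsWithin w I] (fun y => y - w) :=
        hf.isBigO_sub
      have hu : Filter.Tendsto (fun k : ℕ => w + q ^ k * (x - w)) Filter.atTop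
          (nhdsWithin w I) := by
        rw [tendsto_nhdsWithin_iff]
        constructor
        · have := (tendsto_pow_atTop_nhds_zero_of_lt_one hq.le hq1).mul_const (x - w)
          have h2 := this.const_add w
          simpa using h2
        · exact Filter.Eventually.of_forall hmemk
      have hO2 : b =O[Filter.atTop] (fun k : ℕ => q ^ k * (x - w)) := by
        have := hO.comp_tendsto hu
        simpa [hb, Function.comp_def] using this
      refine summable_of_isBigO_nat ?_ hO2
      exact (summable_geometric_of_lt_one hq.le hq1).mul_right (x - w)
    have hb1_sum : Summable (fun k => b (k + 1)) := (summable_nat_add_iff 1).2 hb_sum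
    -- jnTerm formula
    have hterm : ∀ k : ℕ, jnTerm q ω (hahnD q ω I f) x k = (b (k + 1) - b k) * d⁻¹ := by
      intro k
      have hqk : q ^ k ≠ 0 := pow_ne_zero k (ne_of_gt hq)
      have hne : w + q ^ k * (x - w) ≠ w := by
        intro h
        apply hxw
        have : q ^ k * (x - w) = 0 := by linarith
        have := (mul_eq_zero.1 this).resolve_left hqk
        linarith [sub_eq_zero.1 this]
      rw [jnTerm, hxk k, hahnD, if_neg hne]
      have harg : q * (w + q ^ k * (x - w)) + ω = w + q ^ (k + 1) * (x - w) := by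
        have : q * w + ω = w := by nlinarith [hwq]
        rw [pow_succ]; nlinarith [this]
      have hden : (q - 1) * (w + q ^ k * (x - w)) + ω = q ^ k * d := by
        have hw0 : (q - 1) * w + ω = 0 := by nlinarith [hwq]
        rw [hdval]; nlinarith [hw0]
      rw [harg, hden, hb]
      field_simp
      ring
    have hsum : Summable (jnTerm q ω (hahnD q ω I f) x) := by
      apply Summable.congr ((hb1_sum.sub hb_sum).mul_right d⁻¹)
      intro k; exact (hterm k).symm
    refine ⟨hsum, ?_⟩
    have htsum : ∑' k, jnTerm q ω (hahnD q ω I f) x k = -(b 0) * d⁻¹ := by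
      have e1 : ∑' k, jnTerm q ω (hahnD q ω I f) x k
          = ∑' k, (b (k + 1) - b k) * d⁻¹ := tsum_congr hterm
      rw [e1, tsum_mul_right, Summable.tsum_sub hb1_sum hb_sum]
      have e2 : ∑' k, b k = b 0 + ∑' k, b (k + 1) := Summable.tsum_eq_zero_add hb_sum
      rw [e2]; ring
    rw [jnInt0, htsum]
    have hb0 : b 0 = f x - f w := by simp [hb]
    have hxd : x * (1 - q) - ω = -d := by rw [hd]; ring
    rw [hb0, hxd]
    field_simp

theorem integral_hahnD
    (q ω : ℝ) (hq : 0 < q) (hq1 : q < 1) (hω : 0 ≤ ω)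
    (I : Set ℝ) (hI : I.OrdConnected) (hmem : omega0 q ω ∈ I)
    (f : ℝ → ℝ) (hf : HahnDiffOn q ω I f) :
    ∀ a ∈ I, ∀ b ∈ I,
      JNIntegrable q ω (hahnD q ω I f) a b ∧
        jnInt q ω (hahnD q ω I f) a b = f b - f a := by
  intro a ha b hb
  obtain ⟨hsa, hia⟩ := key_lemma q ω hq hq1 I hI hmem f hf a ha
  obtain ⟨hsb, hib⟩ := key_lemma q ω hq hq1 I hI hmem f hf b hb
  exact ⟨⟨hsa, hsb⟩, by rw [jnInt, hia, hib]; ring⟩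


end Hahn
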